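/- Let G₁ be a pseudo strongly regular graph with parameters (n₁, k₁, μ₁) and G₂ a pseudo strongly regular graph with parameters (n₂, k₂, μ₂), where neither G₁ nor G₂ is complete (each contains a pair of distinct non-adjacent vertices) and n₂ ≥ 1. Then the lexicographic product (composition) G₁[G₂] is pseudo strongly regular (for some parameter μ) if and only if μ₁ = k₁ and μ₂ = 0. -/

import Mathlib

open SimpleGraph

def SimpleGraph.IsPseudoSRG {V : Type*} [Fintype V] (G : SimpleGraph V) (n k m : ℕ) : Prop :=
  Fintype.card V = n ∧ (∀ v : V, (G.neighborSet v).ncard = k) ∧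
    ∀ u v : V, u ≠ v → ¬G.Adj u v → (G.commonNeighbors u v).ncard = m

/-- The lexicographic product (composition) of two simple graphs. -/
def SimpleGraph.lexProd {V₁ V₂ : Type*} (G₁ : SimpleGraph V₁) (G₂ : SimpleGraph V₂) :
    SimpleGraph (V₁ × V₂) where
  Adj x y := G₁.Adj x.1 y.1 ∨ (x.1 = y.1 ∧ G₂.Adj x.2 y.2)
  symm := ⟨fun (x y : V₁ × V₂) (h : G₁.Adj x.1 y.1 ∨ (x.1 = y.1 ∧ G₂.Adj x.2 y.2)) => h.elim (fun h => Or.inl h.symm) (fun h => Or.inr ⟨h.1.symm, h.2.symm⟩)⟩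
  loopless := ⟨fun (x : V₁ × V₂) (h : G₁.Adj x.1 x.1 ∨ (x.1 = x.1 ∧ G₂.Adj x.2 x.2)) => h.elim (fun h => G₁.loopless.irrefl _ h) (fun h => G₂.loopless.irrefl _ h.2)⟩

lemma ncard_sprod {α β : Type*} (s : Set α) (t : Set β) :
    (s ×ˢ t).ncard = s.ncard * t.ncard := by
  rw [← Nat.card_coe_set_eq, ← Nat.card_coe_set_eq, ← Nat.card_coe_set_eq,
    Nat.card_congr (Equiv.Set.prod s t), Nat.card_prod]

section lemmas

variable {V₁ V₂ : Type*} (G₁ : SimpleGraph V₁) (G₂ : SimpleGraph V₂)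

lemma lexProd_nbhd (u : V₁) (v : V₂) :
    (G₁.lexProd G₂).neighborSet (u, v) =
      (G₁.neighborSet u ×ˢ Set.univ) ∪ ({u} ×ˢ G₂.neighborSet v) := by
  ext ⟨w, x⟩
  simp only [neighborSet, lexProd, Set.mem_setOf_eq, Set.mem_union, Set.mem_prod,
    Set.mem_univ, Set.mem_singleton_iff]
  constructor
  · rintro (h | ⟨rfl, h⟩)
    · exact Or.inl ⟨h, trivial⟩
    · exact Or.inr ⟨rfl, h⟩
  · rintro (⟨h, -⟩ | ⟨rfl, h⟩)
    · exact Or.inl h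
    · exact Or.inr ⟨rfl, h⟩

lemma lexProd_common_case1 {u u' : V₁} (v v' : V₂) (hne : u ≠ u') (hna : ¬G₁.Adj u u') :
    (G₁.lexProd G₂).commonNeighbors (u, v) (u', v') =
      (G₁.commonNeighbors u u') ×ˢ Set.univ := by
  ext ⟨w, x⟩
  simp only [commonNeighbors, neighborSet, lexProd, Set.mem_inter_iff, Set.mem_setOf_eq,
    Set.mem_prod, Set.mem_univ, and_true]
  constructor
  · rintro ⟨h1 | ⟨rfl, -⟩, h2 | ⟨e2, -⟩⟩
    · exact ⟨h1, h2⟩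
    · exact absurd (e2 ▸ h1) hna
    · exact absurd h2.symm hna
    · exact absurd e2.symm hne
  · rintro ⟨h1, h2⟩; exact ⟨Or.inl h1, Or.inl h2⟩

lemma lexProd_common_case2 (u : V₁) {v v' : V₂} (hne : v ≠ v') (hna : ¬G₂.Adj v v') :
    (G₁.lexProd G₂).commonNeighbors (u, v) (u, v') =
      (G₁.neighborSet u ×ˢ Set.univ) ∪ ({u} ×ˢ G₂.commonNeighbors v v') := by
  ext ⟨w, x⟩
  simp only [commonNeighbors, neighborSet, lexProd, Set.mem_inter_iff, Set.mem_setOf_eq,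
    Set.mem_union, Set.mem_prod, Set.mem_univ, Set.mem_singleton_iff, and_true]
  constructor
  · rintro ⟨h1 | ⟨rfl, hx⟩, h2 | ⟨-, hx'⟩⟩
    · exact Or.inl h1
    · exact Or.inl h1
    · exact absurd h2 (G₁.loopless.irrefl u)
    · exact Or.inr ⟨rfl, hx, hx'⟩
  · rintro (h | ⟨rfl, hx, hx'⟩)
    · exact ⟨Or.inl h, Or.inl h⟩
    · exact ⟨Or.inr ⟨rfl, hx⟩, Or.inr ⟨rfl, hx'⟩⟩

end lemmas

/-- for pseudo strongly regular, non-complete `G₁, G₂` with `n₂ ≥ 1`, the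
lexicographic product `G₁[G₂]` is pseudo strongly regular (for some parameter `μ`) iff
`μ₁ = k₁` and `μ₂ = 0`. -/
theorem stmt_5 {V₁ V₂ : Type*} [Fintype V₁] [Fintype V₂]
    (G₁ : SimpleGraph V₁) (G₂ : SimpleGraph V₂) (n₁ k₁ m₁ n₂ k₂ m₂ : ℕ)
    (h₁ : G₁.IsPseudoSRG n₁ k₁ m₁) (h₂ : G₂.IsPseudoSRG n₂ k₂ m₂)
    (hnc₁ : ∃ a b : V₁, a ≠ b ∧ ¬G₁.Adj a b) (hnc₂ : ∃ a b : V₂, a ≠ b ∧ ¬G₂.Adj a b)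
    (hn₂ : 1 ≤ n₂) :
    (∃ k m : ℕ, (G₁.lexProd G₂).IsPseudoSRG (n₁ * n₂) k m) ↔ (m₁ = k₁ ∧ m₂ = 0) := by
  obtain ⟨hc₁, hd₁, hm₁⟩ := h₁
  obtain ⟨hc₂, hd₂, hm₂⟩ := h₂
  obtain ⟨a, b, hab, hnab⟩ := hnc₁
  obtain ⟨c, d, hcd, hncd⟩ := hnc₂
  have huniv₂ : (Set.univ : Set V₂).ncard = n₂ := by
    rw [Set.ncard_univ, Nat.card_eq_fintype_card, hc₂]
  have case1 : ∀ (u u' : V₁) (v v' : V₂), u ≠ u' → ¬G₁.Adj u u' →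
      ((G₁.lexProd G₂).commonNeighbors (u, v) (u', v')).ncard = m₁ * n₂ := by
    intro u u' v v' hne hna
    rw [lexProd_common_case1 G₁ G₂ v v' hne hna, ncard_sprod, hm₁ u u' hne hna, huniv₂]
  have case2 : ∀ (u : V₁) (v v' : V₂), v ≠ v' → ¬G₂.Adj v v' →
      ((G₁.lexProd G₂).commonNeighbors (u, v) (u, v')).ncard = k₁ * n₂ + m₂ := by
    intro u v v' hne hna
    rw [lexProd_common_case2 G₁ G₂ u hne hna, Set.ncard_union_eq, ncard_sprod, ncard_sprod,
      hd₁ u, huniv₂, Set.ncard_singleton, hm₂ v v' hne hna, one_mul]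
    · exact Set.disjoint_left.2 fun p hp hp' => G₁.loopless.irrefl u (hp'.1 ▸ hp.1)
  have hm₁le : m₁ ≤ k₁ := by
    rw [← hm₁ a b hab hnab, ← hd₁ a]
    exact Set.ncard_le_ncard (fun w hw => hw.1) (Set.toFinite _)
  constructor
  · rintro ⟨k, m, -, -, hcn⟩
    have hv₂ : Nonempty V₂ := Fintype.card_pos_iff.mp (hc₂ ▸ hn₂)
    obtain ⟨v⟩ := hv₂
    have e1 : m₁ * n₂ = m := by
      rw [← case1 a b v v hab hnab]
      exact hcn (a, v) (b, v) (by simp [hab]) (by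
        rintro (h | ⟨h, -⟩); exact hnab h; exact hab h)
    have e2 : k₁ * n₂ + m₂ = m := by
      rw [← case2 a c d hcd hncd]
      exact hcn (a, c) (a, d) (by simp [hcd]) (by
        rintro (h | ⟨-, h⟩); exact G₁.loopless.irrefl a h; exact hncd h)
    have key : m₁ * n₂ = k₁ * n₂ + m₂ := e1.trans e2.symm
    have h0 : m₂ = 0 := by
      have := Nat.mul_le_mul_right n₂ hm₁le
      omega
    refine ⟨?_, h0⟩
    rw [h0, add_zero] at key
    exact Nat.eq_of_mul_eq_mul_right (by omega) key
  · rintro ⟨rfl, rfl⟩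
    refine ⟨m₁ * n₂ + k₂, m₁ * n₂, ?_, ?_, ?_⟩
    · rw [Fintype.card_prod, hc₁, hc₂]
    · rintro ⟨u, v⟩
      rw [lexProd_nbhd, Set.ncard_union_eq, ncard_sprod, ncard_sprod, hd₁ u, huniv₂,
        Set.ncard_singleton, hd₂ v, one_mul]
      · exact Set.disjoint_left.2 fun p hp hp' => G₁.loopless.irrefl u (hp'.1 ▸ hp.1)
    · rintro ⟨u, v⟩ ⟨u', v'⟩ hne hna
      rcases eq_or_ne u u' with rfl | huu
      · have hvv : v ≠ v' := fun h => hne (by rw [h])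
        have hnv : ¬G₂.Adj v v' := fun h => hna (Or.inr ⟨rfl, h⟩)
        rw [case2 u v v' hvv hnv, add_zero]
      · have hnu : ¬G₁.Adj u u' := fun h => hna (Or.inl h)
        rw [case1 u u' v v' huu hnu]
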